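/- arXiv:2512.12460 — 3 statements merged into one kernel-verified Lean document; each statement's English description precedes it below -/
import Mathlib

section
/- In A = k⟨x₁, x₂, x₃⟩ with δ = x₁x₂ − x₂x₁ − 1 and 𝒱 = {x₂ⁱx₁ʲ : i, j ≥ 0}, for any v₁, v₂ ∈ 𝒱, β₁, β₂ ∈ {x₃, δ}, and nonzero f₁, f₂ ∈ A with (β₁, v₁) ≠ (β₂, v₂), the leading monomials satisfy TIP(f₁β₁v₁) ≠ TIP(f₂β₂v₂) with respect to the degree order. -/
noncomputable section

/-- The free algebra `k⟨x₁, x₂, x₃⟩`. -/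
abbrev FA (k : Type) [Field k] := MonoidAlgebra k (FreeMonoid (Fin 3))

/-- The generators: `X 0 = x₁`, `X 1 = x₂`, `X 2 = x₃`. -/
def X {k : Type} [Field k] (i : Fin 3) : FA k :=
  MonoidAlgebra.single (FreeMonoid.of i) 1

/-- Degree-vector list of a word: counts of the generators with the count of `x₃` first. -/
def dlist (w : FreeMonoid (Fin 3)) : List ℕ :=
  (List.ofFn fun i : Fin 3 => (FreeMonoid.toList w).count i).reverse

/-- The degree order: compare degree vectors right-lexicographically (count of `x₃` first),
then break ties by the right lexicographic word order with `1 ≺ x₁ ≺ x₂ ≺ x₃`. -/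
instance degOrder : LinearOrder (FreeMonoid (Fin 3)) :=
  LinearOrder.lift' (fun w => toLex (dlist w, (FreeMonoid.toList w).reverse))
    (fun a b h => by
      have h2 : (FreeMonoid.toList a).reverse = (FreeMonoid.toList b).reverse :=
        congrArg (fun p : Lex (List ℕ × List (Fin 3)) => (ofLex p).2) h
      exact FreeMonoid.toList.injective (List.reverse_injective h2))

/-- `TIP f`: the largest monomial occurring in `f` for the degree order, `TIP 0 = ⊥`. -/
def TIP {k : Type} [Field k] (f : FA k) : WithBot (FreeMonoid (Fin 3)) := f.coeff.support.max

/-! ### The degree order is a monomial order -/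

lemma deg_lt_def (a b : FreeMonoid (Fin 3)) :
    a < b ↔ dlist a < dlist b ∨ dlist a = dlist b ∧
      List.Lex (· < ·) (FreeMonoid.toList a).reverse (FreeMonoid.toList b).reverse :=
  Prod.Lex.lt_iff

lemma dlist_def (w : FreeMonoid (Fin 3)) :
    dlist w = [(FreeMonoid.toList w).count 2, (FreeMonoid.toList w).count 1,
      (FreeMonoid.toList w).count 0] := by
  simp [dlist, List.ofFn_succ]

lemma cons_lex_iff {α} [LinearOrder α] {a b : α} {l₁ l₂ : List α} :
    List.Lex (· < ·) (a :: l₁) (b :: l₂) ↔ a < b ∨ (a = b ∧ List.Lex (· < ·) l₁ l₂) := by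
  constructor
  · intro h
    cases h with
    | cons h => exact Or.inr ⟨rfl, h⟩
    | rel h => exact Or.inl h
  · rintro (h | ⟨rfl, h⟩)
    · exact List.Lex.rel h
    · exact List.Lex.cons h

lemma triple_lt {a b c d e f : ℕ} :
    ([a, b, c] : List ℕ) < [d, e, f] ↔
      a < d ∨ a = d ∧ (b < e ∨ b = e ∧ c < f) := by
  show List.Lex _ _ _ ↔ _
  simp only [cons_lex_iff]
  have : ¬ List.Lex (fun x1 x2 => x1 < x2) ([] : List ℕ) [] := List.not_lex_nil
  tauto

lemma lex_append_right_len {α} (r : α → α → Prop) :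
    ∀ {l₁ l₂ : List α}, List.Lex r l₁ l₂ → l₁.length = l₂.length →
      ∀ t, List.Lex r (l₁ ++ t) (l₂ ++ t) := by
  intro l₁ l₂ h
  induction h with
  | nil => intro hl; simp at hl
  | rel hab => intro _ t; exact List.Lex.rel hab
  | cons h ih => intro hl t; exact List.Lex.cons (ih (by simpa using hl) t)

lemma length_eq_counts (l : List (Fin 3)) :
    l.length = l.count 0 + l.count 1 + l.count 2 := by
  induction l with
  | nil => simp
  | cons a t ih => fin_cases a <;> simp [List.count_cons, ih] <;> omega

lemma deg_mul_lt_right {a b : FreeMonoid (Fin 3)} (h : a < b) (c : FreeMonoid (Fin 3)) :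
    a * c < b * c := by
  rw [deg_lt_def] at h ⊢
  rcases h with hd | ⟨hd, hlex⟩
  · left
    simp only [dlist_def, FreeMonoid.toList_mul, List.count_append] at hd ⊢
    rw [triple_lt] at hd ⊢
    omega
  · right
    constructor
    · simp only [dlist_def, FreeMonoid.toList_mul, List.count_append,
        List.cons.injEq, and_true] at hd ⊢
      omega
    · simp only [FreeMonoid.toList_mul, List.reverse_append]
      exact List.Lex.append_left _ hlex _

lemma deg_mul_lt_left {a b : FreeMonoid (Fin 3)} (h : a < b) (c : FreeMonoid (Fin 3)) :
    c * a < c * b := by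
  rw [deg_lt_def] at h ⊢
  rcases h with hd | ⟨hd, hlex⟩
  · left
    simp only [dlist_def, FreeMonoid.toList_mul, List.count_append] at hd ⊢
    rw [triple_lt] at hd ⊢
    omega
  · right
    have hcnt : ∀ i : Fin 3, (FreeMonoid.toList a).count i = (FreeMonoid.toList b).count i := by
      simp only [dlist_def, List.cons.injEq, and_true] at hd
      intro i
      fin_cases i
      · exact hd.2.2
      · exact hd.2.1
      · exact hd.1
    constructor
    · simp only [dlist_def, FreeMonoid.toList_mul, List.count_append,
        List.cons.injEq, and_true]
      rw [hcnt 0, hcnt 1, hcnt 2]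
      exact ⟨rfl, rfl, rfl⟩
    · simp only [FreeMonoid.toList_mul, List.reverse_append]
      apply lex_append_right_len _ hlex
      have la := length_eq_counts (FreeMonoid.toList a)
      have lb := length_eq_counts (FreeMonoid.toList b)
      have h0 := hcnt 0
      have h1 := hcnt 1
      have h2 := hcnt 2
      simp only [List.length_reverse]
      omega

lemma deg_mul_le_right {a b : FreeMonoid (Fin 3)} (h : a ≤ b) (c : FreeMonoid (Fin 3)) :
    a * c ≤ b * c := by
  rcases h.lt_or_eq with h | rfl
  · exact (deg_mul_lt_right h c).le
  · exact le_rfl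

lemma deg_mul_le_left {a b : FreeMonoid (Fin 3)} (h : a ≤ b) (c : FreeMonoid (Fin 3)) :
    c * a ≤ c * b := by
  rcases h.lt_or_eq with h | rfl
  · exact (deg_mul_lt_left h c).le
  · exact le_rfl

/-! ### The leading word of a nonzero element -/

/-- The leading word of a nonzero element. -/
def mw {k : Type} [Field k] (f : FA k) (hf : f ≠ 0) : FreeMonoid (Fin 3) :=
  f.coeff.support.max' (Finsupp.support_nonempty_iff.2 (MonoidAlgebra.coeff_eq_zero.not.2 hf))

lemma mw_mem {k : Type} [Field k] (f : FA k) (hf : f ≠ 0) : mw f hf ∈ f.coeff.support :=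
  Finset.max'_mem _ _

lemma le_mw {k : Type} [Field k] {f : FA k} (hf : f ≠ 0) {a : FreeMonoid (Fin 3)}
    (ha : a ∈ f.coeff.support) : a ≤ mw f hf :=
  Finset.le_max' _ _ ha

lemma TIP_eq_mw {k : Type} [Field k] (f : FA k) (hf : f ≠ 0) :
    TIP f = (mw f hf : WithBot (FreeMonoid (Fin 3))) :=
  (Finset.coe_max' _).symm

lemma mul_apply_mw {k : Type} [Field k] (f g : FA k) (hf : f ≠ 0) (hg : g ≠ 0) :
    (f * g).coeff (mw f hf * mw g hg) = f.coeff (mw f hf) * g.coeff (mw g hg) := by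
  classical
  rw [MonoidAlgebra.coeff_mul, Finsupp.sum,
    Finset.sum_eq_single_of_mem (mw f hf) (mw_mem f hf)]
  · rw [Finsupp.sum, Finset.sum_eq_single_of_mem (mw g hg) (mw_mem g hg)]
    · rw [if_pos rfl]
    · intro b _ hne
      rw [if_neg]
      exact fun hEq => hne (mul_left_cancel hEq)
  · intro a ha hne
    rw [Finsupp.sum]
    apply Finset.sum_eq_zero
    intro b hb
    rw [if_neg]
    intro hEq
    have h1 : a < mw f hf := lt_of_le_of_ne (le_mw hf ha) hne
    have h2 : a * b < mw f hf * mw g hg :=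
      lt_of_lt_of_le (deg_mul_lt_right h1 b) (deg_mul_le_left (le_mw hg hb) _)
    exact h2.ne hEq

lemma mul_apply_mw_ne {k : Type} [Field k] (f g : FA k) (hf : f ≠ 0) (hg : g ≠ 0) :
    (f * g).coeff (mw f hf * mw g hg) ≠ 0 := by
  rw [mul_apply_mw f g hf hg]
  exact mul_ne_zero (Finsupp.mem_support_iff.1 (mw_mem f hf))
    (Finsupp.mem_support_iff.1 (mw_mem g hg))

lemma FA_mul_ne_zero {k : Type} [Field k] (f g : FA k) (hf : f ≠ 0) (hg : g ≠ 0) :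
    f * g ≠ 0 := by
  intro h
  exact mul_apply_mw_ne f g hf hg (by rw [h]; rfl)

lemma TIP_mul {k : Type} [Field k] (f g : FA k) (hf : f ≠ 0) (hg : g ≠ 0) :
    TIP (f * g) = ((mw f hf * mw g hg : FreeMonoid (Fin 3)) : WithBot (FreeMonoid (Fin 3))) := by
  classical
  apply le_antisymm
  · apply Finset.max_le
    intro x hx
    obtain ⟨a, ha, b, hb, rfl⟩ := Finset.mem_mul.1 (MonoidAlgebra.support_coeff_mul_subset f g hx)
    exact WithBot.coe_le_coe.2
      (le_trans (deg_mul_le_right (le_mw hf ha) b) (deg_mul_le_left (le_mw hg hb) _))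
  · exact Finset.le_max (Finsupp.mem_support_iff.2 (mul_apply_mw_ne f g hf hg))

lemma mw_mul {k : Type} [Field k] (f g : FA k) (hf : f ≠ 0) (hg : g ≠ 0) :
    mw (f * g) (FA_mul_ne_zero f g hf hg) = mw f hf * mw g hg := by
  have h := TIP_mul f g hf hg
  rw [TIP_eq_mw (f * g) (FA_mul_ne_zero f g hf hg)] at h
  exact_mod_cast h

lemma single_ne_zero' {k : Type} [Field k] (w : FreeMonoid (Fin 3)) :
    (MonoidAlgebra.single w (1:k) : FA k) ≠ 0 := by
  intro h
  have h1 : (MonoidAlgebra.single w (1:k) : FA k).coeff w = 0 := by rw [h]; rfl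
  rw [MonoidAlgebra.coeff_single, Finsupp.single_eq_same] at h1
  exact one_ne_zero h1

lemma mw_single {k : Type} [Field k] (w : FreeMonoid (Fin 3))
    (h : (MonoidAlgebra.single w (1:k) : FA k) ≠ 0) :
    mw (MonoidAlgebra.single w (1:k)) h = w := by
  classical
  unfold mw
  have hs : (MonoidAlgebra.single w (1:k)).coeff.support = {w} :=
    Finsupp.support_single_ne_zero _ one_ne_zero
  simp [hs]

/-! ### δ -/

lemma delta_apply (k : Type) [Field k] :
    (X 0 * X 1 - X 1 * X 0 - 1 : FA k).coeff (FreeMonoid.of 0 * FreeMonoid.of 1) = 1 := by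
  classical
  have h1 : (FreeMonoid.of 1 * FreeMonoid.of 0 : FreeMonoid (Fin 3)) ≠
      FreeMonoid.of 0 * FreeMonoid.of 1 := by decide
  have h2 : (1 : FreeMonoid (Fin 3)) ≠ FreeMonoid.of 0 * FreeMonoid.of 1 := by decide
  have e1 : (X 0 * X 1 : FA k) = MonoidAlgebra.single (FreeMonoid.of 0 * FreeMonoid.of 1) 1 := by
    simp [X, MonoidAlgebra.single_mul_single]
  have e2 : (X 1 * X 0 : FA k) = MonoidAlgebra.single (FreeMonoid.of 1 * FreeMonoid.of 0) 1 := by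
    simp [X, MonoidAlgebra.single_mul_single]
  rw [e1, e2, MonoidAlgebra.one_def, MonoidAlgebra.coeff_sub, MonoidAlgebra.coeff_sub,
    Finsupp.sub_apply, Finsupp.sub_apply, MonoidAlgebra.coeff_single, MonoidAlgebra.coeff_single,
    MonoidAlgebra.coeff_single,
    Finsupp.single_eq_same, Finsupp.single_eq_of_ne' h1, Finsupp.single_eq_of_ne' h2]
  ring

lemma delta_ne_zero {k : Type} [Field k] (δ : FA k)
    (hδ : δ = X 0 * X 1 - X 1 * X 0 - 1) : δ ≠ 0 := by
  intro h
  have := delta_apply k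
  rw [← hδ, h] at this
  simp at this

lemma mw_delta {k : Type} [Field k] (δ : FA k)
    (hδ : δ = X 0 * X 1 - X 1 * X 0 - 1) (h0 : δ ≠ 0) :
    mw δ h0 = FreeMonoid.of 0 * FreeMonoid.of 1 := by
  classical
  apply le_antisymm
  · have e1 : (X 0 * X 1 : FA k) = MonoidAlgebra.single (FreeMonoid.of 0 * FreeMonoid.of 1) 1 := by
      simp [X, MonoidAlgebra.single_mul_single]
    have e2 : (X 1 * X 0 : FA k) = MonoidAlgebra.single (FreeMonoid.of 1 * FreeMonoid.of 0) 1 := by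
      simp [X, MonoidAlgebra.single_mul_single]
    have hsub : ∀ x ∈ δ.coeff.support, x = FreeMonoid.of 0 * FreeMonoid.of 1 ∨
        x = FreeMonoid.of 1 * FreeMonoid.of 0 ∨ x = (1 : FreeMonoid (Fin 3)) := by
      intro x hx
      rw [hδ, MonoidAlgebra.coeff_sub, MonoidAlgebra.coeff_sub] at hx
      rcases Finset.mem_union.1 (Finsupp.support_sub hx) with hx' | hx'
      · rcases Finset.mem_union.1 (Finsupp.support_sub hx') with h | h
        · exact Or.inl (Finset.mem_singleton.1 (Finsupp.support_single_subset (e1 ▸ h)))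
        · exact Or.inr (Or.inl
            (Finset.mem_singleton.1 (Finsupp.support_single_subset (e2 ▸ h))))
      · have hone : ((1 : FA k)).coeff.support ⊆ {(1 : FreeMonoid (Fin 3))} := by
          rw [MonoidAlgebra.one_def]
          exact Finsupp.support_single_subset
        exact Or.inr (Or.inr (Finset.mem_singleton.1 (hone hx')))
    rcases hsub _ (mw_mem δ h0) with h | h | h
    · exact h.le
    · rw [h]
      exact (by decide : (FreeMonoid.of 1 * FreeMonoid.of 0 : FreeMonoid (Fin 3)) <
        FreeMonoid.of 0 * FreeMonoid.of 1).le
    · rw [h]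
      exact (by decide : (1 : FreeMonoid (Fin 3)) < FreeMonoid.of 0 * FreeMonoid.of 1).le
  · apply le_mw
    rw [Finsupp.mem_support_iff, hδ, delta_apply]
    exact one_ne_zero

/-! ### Word combinatorics -/

lemma toList_pow_repl (a : Fin 3) (n : ℕ) :
    FreeMonoid.toList ((FreeMonoid.of a) ^ n) = List.replicate n a := by
  induction n with
  | zero => rfl
  | succ n ih => rw [pow_succ, FreeMonoid.toList_mul, ih]; simp [List.replicate_succ']

lemma repl_eq {α : Type*} (a : α) :
    ∀ (m n : ℕ) (s t : List α), s.head? ≠ some a → t.head? ≠ some a →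
      List.replicate m a ++ s = List.replicate n a ++ t → m = n ∧ s = t := by
  intro m
  induction m with
  | zero =>
    intro n s t hs ht h
    cases n with
    | zero => simpa using h
    | succ n =>
      exfalso
      apply hs
      rw [List.replicate_zero, List.nil_append] at h
      rw [h, List.replicate_succ]
      rfl
  | succ m ih =>
    intro n s t hs ht h
    cases n with
    | zero =>
      exfalso
      apply ht
      rw [List.replicate_zero, List.nil_append] at h
      rw [← h, List.replicate_succ]
      rfl
    | succ n =>
      rw [List.replicate_succ, List.replicate_succ, List.cons_append, List.cons_append,
        List.cons.injEq] at h
      obtain ⟨m_eq, s_eq⟩ := ih n s t hs ht h.2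
      exact ⟨by omega, s_eq⟩

lemma head_repl_cons {α : Type*} (b c : α) (i : ℕ) (r : List α) :
    (List.replicate i b ++ c :: r).head? = some (if i = 0 then c else b) := by
  cases i <;> simp [List.replicate_succ]

lemma head_ne {α : Type*} {b c a : α} (hb : b ≠ a) (hc : c ≠ a) (i : ℕ) (r : List α) :
    (List.replicate i b ++ c :: r).head? ≠ some a := by
  rw [head_repl_cons]
  split <;> simp [hb, hc]

lemma head_ne' {α : Type*} {b a : α} (hb : b ≠ a) (i : ℕ) (c : α) (r : List α) :
    (List.replicate (i + 1) b ++ c :: r).head? ≠ some a := by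
  rw [head_repl_cons]
  simp [hb]

lemma head_cons_ne {α : Type*} {c a : α} (h : c ≠ a) (r : List α) :
    (c :: r).head? ≠ some a := by
  simpa using h

lemma repl_snoc {α : Type*} (a : α) (i : ℕ) (l : List α) :
    List.replicate i a ++ a :: l = List.replicate (i + 1) a ++ l := by
  simp [List.replicate_succ', List.append_assoc]

lemma claimA {i₁ j₁ i₂ j₂ : ℕ} {r₁ r₂ : List (Fin 3)}
    (h : List.replicate j₁ (0:Fin 3) ++ (List.replicate i₁ 1 ++ 2 :: r₁) =
      List.replicate j₂ 0 ++ (List.replicate i₂ 1 ++ 2 :: r₂)) :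
    i₁ = i₂ ∧ j₁ = j₂ := by
  obtain ⟨hj, hs⟩ := repl_eq 0 j₁ j₂ _ _ (head_ne (by decide) (by decide) _ _)
    (head_ne (by decide) (by decide) _ _) h
  obtain ⟨hi, -⟩ := repl_eq 1 i₁ i₂ _ _ (head_cons_ne (by decide) _)
    (head_cons_ne (by decide) _) hs
  exact ⟨hi, hj⟩

lemma claimB {i₁ j₁ i₂ j₂ : ℕ} {r₁ r₂ : List (Fin 3)}
    (h : List.replicate j₁ (0:Fin 3) ++ (List.replicate (i₁ + 1) 1 ++ 0 :: r₁) =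
      List.replicate j₂ 0 ++ (List.replicate (i₂ + 1) 1 ++ 0 :: r₂)) :
    i₁ = i₂ ∧ j₁ = j₂ := by
  obtain ⟨hj, hs⟩ := repl_eq 0 j₁ j₂ _ _ (head_ne' (by decide) _ _ _)
    (head_ne' (by decide) _ _ _) h
  obtain ⟨hi, -⟩ := repl_eq 1 (i₁ + 1) (i₂ + 1) _ _ (head_cons_ne (by decide) _)
    (head_cons_ne (by decide) _) hs
  exact ⟨by omega, hj⟩

lemma claimC {i₁ j₁ i₂ j₂ : ℕ} {r₁ r₂ : List (Fin 3)}
    (h : List.replicate j₁ (0:Fin 3) ++ (List.replicate i₁ 1 ++ 2 :: r₁) =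
      List.replicate j₂ 0 ++ (List.replicate (i₂ + 1) 1 ++ 0 :: r₂)) :
    False := by
  obtain ⟨hj, hs⟩ := repl_eq 0 j₁ j₂ _ _ (head_ne (by decide) (by decide) _ _)
    (head_ne' (by decide) _ _ _) h
  obtain ⟨-, ht⟩ := repl_eq 1 i₁ (i₂ + 1) _ _ (head_cons_ne (by decide) _)
    (head_cons_ne (by decide) _) hs
  injection ht with h1 _
  exact absurd h1 (by decide)

/-! ### Assembly -/

lemma word_eq_core {k : Type} [Field k] (f₁ f₂ : FA k) (hf₁ : f₁ ≠ 0) (hf₂ : f₂ ≠ 0)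
    (β₁ β₂ : FA k) (hb₁ : β₁ ≠ 0) (hb₂ : β₂ ≠ 0) (v₁ v₂ : FreeMonoid (Fin 3))
    (heq : TIP (f₁ * β₁ * MonoidAlgebra.single v₁ 1) =
      TIP (f₂ * β₂ * MonoidAlgebra.single v₂ 1)) :
    mw f₁ hf₁ * mw β₁ hb₁ * v₁ = mw f₂ hf₂ * mw β₂ hb₂ * v₂ := by
  rw [TIP_mul (f₁ * β₁) _ (FA_mul_ne_zero f₁ β₁ hf₁ hb₁) (single_ne_zero' v₁),
    TIP_mul (f₂ * β₂) _ (FA_mul_ne_zero f₂ β₂ hf₂ hb₂) (single_ne_zero' v₂),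
    mw_mul f₁ β₁ hf₁ hb₁, mw_mul f₂ β₂ hf₂ hb₂, mw_single, mw_single] at heq
  exact_mod_cast heq

theorem stmt8 (k : Type) [Field k]
    (δ : FA k) (hδ : δ = X 0 * X 1 - X 1 * X 0 - 1)
    (V : Set (FreeMonoid (Fin 3)))
    (hV : V = {w | ∃ i j : ℕ, w = (FreeMonoid.of (1 : Fin 3)) ^ i * (FreeMonoid.of 0) ^ j}) :
    ∀ v₁ ∈ V, ∀ v₂ ∈ V, ∀ β₁ ∈ ({X 2, δ} : Set (FA k)), ∀ β₂ ∈ ({X 2, δ} : Set (FA k)),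
      ∀ f₁ f₂ : FA k, f₁ ≠ 0 → f₂ ≠ 0 → (β₁, v₁) ≠ (β₂, v₂) →
        TIP (f₁ * β₁ * MonoidAlgebra.single v₁ 1) ≠
          TIP (f₂ * β₂ * MonoidAlgebra.single v₂ 1) := by
  intro v₁ hv₁ v₂ hv₂ β₁ hβ₁ β₂ hβ₂ f₁ f₂ hf₁ hf₂ hne heq
  rw [hV] at hv₁ hv₂
  obtain ⟨i₁, j₁, rfl⟩ := hv₁
  obtain ⟨i₂, j₂, rfl⟩ := hv₂
  have hδ0 : δ ≠ 0 := delta_ne_zero δ hδ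
  have hX2 : (X 2 : FA k) ≠ 0 := single_ne_zero' (FreeMonoid.of 2)
  have hmwX2 : mw (X 2 : FA k) hX2 = FreeMonoid.of 2 := mw_single (FreeMonoid.of 2) hX2
  have hmwδ : mw δ hδ0 = FreeMonoid.of 0 * FreeMonoid.of 1 := mw_delta δ hδ hδ0
  simp only [Set.mem_insert_iff, Set.mem_singleton_iff] at hβ₁ hβ₂
  rcases hβ₁ with rfl | rfl <;> rcases hβ₂ with rfl | rfl
  · -- X 2, X 2
    have hw := word_eq_core f₁ f₂ hf₁ hf₂ _ _ hX2 hX2 _ _ heq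
    rw [hmwX2] at hw
    have hrev := congrArg (fun w => (FreeMonoid.toList w).reverse) hw
    simp only [FreeMonoid.toList_mul, List.reverse_append, toList_pow_repl,
      List.reverse_replicate, FreeMonoid.toList_of, List.reverse_cons, List.reverse_nil,
      List.append_assoc, List.nil_append, List.cons_append] at hrev
    obtain ⟨hi, hj⟩ := claimA hrev
    exact hne (by rw [hi, hj])
  · -- X 2, δ
    have hw := word_eq_core f₁ f₂ hf₁ hf₂ _ _ hX2 hδ0 _ _ heq
    rw [hmwX2, hmwδ] at hw
    have hrev := congrArg (fun w => (FreeMonoid.toList w).reverse) hw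
    simp only [FreeMonoid.toList_mul, List.reverse_append, toList_pow_repl,
      List.reverse_replicate, FreeMonoid.toList_of, List.reverse_cons, List.reverse_nil,
      List.append_assoc, List.nil_append, List.cons_append] at hrev
    rw [repl_snoc] at hrev
    exact claimC hrev
  · -- δ, X 2
    have hw := word_eq_core f₁ f₂ hf₁ hf₂ _ _ hδ0 hX2 _ _ heq
    rw [hmwX2, hmwδ] at hw
    have hrev := congrArg (fun w => (FreeMonoid.toList w).reverse) hw
    simp only [FreeMonoid.toList_mul, List.reverse_append, toList_pow_repl,
      List.reverse_replicate, FreeMonoid.toList_of, List.reverse_cons, List.reverse_nil,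
      List.append_assoc, List.nil_append, List.cons_append] at hrev
    rw [repl_snoc] at hrev
    exact claimC hrev.symm
  · -- δ, δ
    have hw := word_eq_core f₁ f₂ hf₁ hf₂ _ _ hδ0 hδ0 _ _ heq
    rw [hmwδ] at hw
    have hrev := congrArg (fun w => (FreeMonoid.toList w).reverse) hw
    simp only [FreeMonoid.toList_mul, List.reverse_append, toList_pow_repl,
      List.reverse_replicate, FreeMonoid.toList_of, List.reverse_cons, List.reverse_nil,
      List.append_assoc, List.nil_append, List.cons_append] at hrev
    rw [repl_snoc, repl_snoc] at hrev
    obtain ⟨hi, hj⟩ := claimB hrev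
    exact hne (by rw [hi, hj])
end
end

section
/- In A = k⟨x₁, x₂, x₃⟩ with δ = x₁x₂ − x₂x₁ − 1, for every nonzero f in the two-sided ideal (x₃, δ) and every monomial v of the form x₂ⁱx₁ʲ, the leading monomial of f with respect to the degree order is not equal to v. In particular, if f ∈ (δ) (the two-sided ideal generated by δ alone), then TIP(f) contains the factor x₁x₂, i.e., TIP(f) = a·x₁x₂·b for some monomials a, b. -/
noncomputable section

namespace Stmt9Aux

/-- letter counts -/
def c (x : Fin 3) (w : FreeMonoid (Fin 3)) : ℕ := (FreeMonoid.toList w).count x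

lemma dlist_eq (w : FreeMonoid (Fin 3)) : dlist w = [c 2 w, c 1 w, c 0 w] := by
  simp [dlist, List.ofFn_succ, c]

lemma le_def (a b : FreeMonoid (Fin 3)) : a ≤ b ↔
    toLex (dlist a, (FreeMonoid.toList a).reverse) ≤ toLex (dlist b, (FreeMonoid.toList b).reverse) := Iff.rfl

lemma lt_def (a b : FreeMonoid (Fin 3)) : a < b ↔
    toLex (dlist a, (FreeMonoid.toList a).reverse) < toLex (dlist b, (FreeMonoid.toList b).reverse) := Iff.rfl

lemma lex3 {a b c a' b' c' : ℕ} :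
    ([a,b,c] : List ℕ) < [a',b',c'] ↔ a < a' ∨ (a = a' ∧ (b < b' ∨ (b = b' ∧ c < c'))) := by
  show List.Lex _ _ _ ↔ _
  constructor
  · intro h
    cases h with
    | rel h => exact Or.inl h
    | cons h =>
      cases h with
      | rel h => exact Or.inr ⟨rfl, Or.inl h⟩
      | cons h =>
        cases h with
        | rel h => exact Or.inr ⟨rfl, Or.inr ⟨rfl, h⟩⟩
        | cons h => cases h
  · rintro (h | ⟨rfl, h | ⟨rfl, h⟩⟩)
    · exact List.Lex.rel h
    · exact List.Lex.cons (List.Lex.rel h)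
    · exact List.Lex.cons (List.Lex.cons (List.Lex.rel h))

lemma dlt_iff (v w : FreeMonoid (Fin 3)) : dlist v < dlist w ↔
    c 2 v < c 2 w ∨ (c 2 v = c 2 w ∧ (c 1 v < c 1 w ∨ (c 1 v = c 1 w ∧ c 0 v < c 0 w))) := by
  rw [dlist_eq, dlist_eq]; exact lex3

lemma deq_iff (v w : FreeMonoid (Fin 3)) : dlist v = dlist w ↔
    c 2 v = c 2 w ∧ c 1 v = c 1 w ∧ c 0 v = c 0 w := by
  rw [dlist_eq, dlist_eq]; simp

lemma c_cons (x a : Fin 3) (s : FreeMonoid (Fin 3)) :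
    c x (FreeMonoid.of a * s) = c x s + (if a = x then 1 else 0) := by
  show (FreeMonoid.toList (FreeMonoid.of a * s)).count x = _
  rw [FreeMonoid.toList_of_mul, List.count_cons]
  simp [c, beq_iff_eq]

lemma length_eq (s : List (Fin 3)) : s.length = s.count 0 + s.count 1 + s.count 2 := by
  induction s with
  | nil => simp
  | cons a s ih => fin_cases a <;> simp [List.count_cons, ih] <;> omega

lemma lex_append_right {l₁ l₂ t : List (Fin 3)} (hlen : l₁.length = l₂.length)
    (h : List.Lex (· < ·) l₁ l₂) : List.Lex (· < ·) (l₁ ++ t) (l₂ ++ t) := by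
  induction h with
  | nil => simp at hlen
  | rel h => exact List.Lex.rel h
  | cons h ih => exact List.Lex.cons (ih (by simpa using hlen))

lemma lex_append_left {l₁ l₂ : List (Fin 3)} (t : List (Fin 3))
    (h : List.Lex (· < ·) l₁ l₂) : List.Lex (· < ·) (t ++ l₁) (t ++ l₂) := by
  induction t with
  | nil => exact h
  | cons a t ih => exact List.Lex.cons ih

lemma length_eq_of_deq {s r : FreeMonoid (Fin 3)} (h : dlist s = dlist r) :
    (FreeMonoid.toList s).length = (FreeMonoid.toList r).length := by
  rw [deq_iff] at h
  rw [length_eq, length_eq (FreeMonoid.toList r)]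
  simp only [c] at h
  omega

lemma mono (a : Fin 3) {s r : FreeMonoid (Fin 3)} (h : s ≤ r) :
    FreeMonoid.of a * s ≤ FreeMonoid.of a * r := by
  rw [le_def] at h ⊢
  rw [Prod.Lex.toLex_le_toLex] at h ⊢
  have hw : ∀ x : FreeMonoid (Fin 3),
      (FreeMonoid.toList (FreeMonoid.of a * x)).reverse = (FreeMonoid.toList x).reverse ++ [a] := by
    intro x; rw [FreeMonoid.toList_of_mul]; simp
  rcases h with h | ⟨h1, h2⟩
  · left
    rw [dlt_iff] at h ⊢
    simp only [c_cons]
    rcases h with h | ⟨h1, h | ⟨h2, h3⟩⟩ <;> omega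
  · have hlen : (FreeMonoid.toList s).length = (FreeMonoid.toList r).length := length_eq_of_deq h1
    rcases h2.lt_or_eq with h2 | h2
    · right
      constructor
      · rw [deq_iff] at h1 ⊢; simp only [c_cons]; omega
      · rw [hw, hw]
        exact le_of_lt (lex_append_right (by simp [hlen]) h2)
    · have : s = r := FreeMonoid.toList.injective (List.reverse_injective h2)
      subst this
      exact Or.inr ⟨rfl, le_refl _⟩

lemma lt_swap (l : List (Fin 3)) :
    FreeMonoid.ofList (1 :: 0 :: l) < FreeMonoid.ofList (0 :: 1 :: l) := by
  rw [lt_def, Prod.Lex.toLex_lt_toLex]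
  right
  constructor
  · rw [deq_iff]
    refine ⟨?_, ?_, ?_⟩ <;>
      simp [c, FreeMonoid.toList_ofList, List.count_cons] <;> omega
  · simp only [FreeMonoid.toList_ofList, List.reverse_cons, List.append_assoc]
    exact lex_append_left l.reverse (List.Lex.rel (by decide))

lemma lt_drop (l : List (Fin 3)) :
    FreeMonoid.ofList l < FreeMonoid.ofList (0 :: 1 :: l) := by
  rw [lt_def, Prod.Lex.toLex_lt_toLex]
  left
  rw [dlt_iff]
  right
  constructor
  · simp [c, FreeMonoid.toList_ofList, List.count_cons]
  · left
    simp [c, FreeMonoid.toList_ofList, List.count_cons]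

variable {k : Type} [Field k]

abbrev M (k : Type) [Field k] := FreeMonoid (Fin 3) →₀ k

def nf1 (k : Type) [Field k] : List (Fin 3) → M k :=
  List.rec (Finsupp.single (FreeMonoid.ofList [0]) 1)
    (fun a s prev =>
      if a = (1 : Fin 3) then
        Finsupp.mapDomain (fun w => FreeMonoid.of 1 * w) prev + Finsupp.single (FreeMonoid.ofList s) 1
      else Finsupp.single (FreeMonoid.ofList (0 :: a :: s)) 1)

lemma nf1_nil : nf1 k [] = Finsupp.single (FreeMonoid.ofList [0]) 1 := rfl

lemma nf1_cons_def (a : Fin 3) (s : List (Fin 3)) :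
    nf1 k (a :: s) = if a = (1 : Fin 3) then
        Finsupp.mapDomain (fun w => FreeMonoid.of 1 * w) (nf1 k s) + Finsupp.single (FreeMonoid.ofList s) 1
      else Finsupp.single (FreeMonoid.ofList (0 :: a :: s)) 1 := rfl

lemma nf1_cons1 (s : List (Fin 3)) :
    nf1 k (1 :: s) = Finsupp.mapDomain (fun w => FreeMonoid.of 1 * w) (nf1 k s)
      + Finsupp.single (FreeMonoid.ofList s) 1 := by
  rw [nf1_cons_def, if_pos rfl]

lemma nf1_cons (a : Fin 3) (ha : a ≠ 1) (s : List (Fin 3)) :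
    nf1 k (a :: s) = Finsupp.single (FreeMonoid.ofList (0 :: a :: s)) 1 := by
  rw [nf1_cons_def, if_neg ha]

def L1 : M k →ₗ[k] M k := Finsupp.linearCombination k (fun w => nf1 k (FreeMonoid.toList w))

def L2 : M k →ₗ[k] M k := Finsupp.lmapDomain k k (fun w => FreeMonoid.of 1 * w)

def Lc3 : M k →ₗ[k] M k := Finsupp.lmapDomain k k (fun w => FreeMonoid.of 2 * w)

def Lgen (T : M k →ₗ[k] M k) : Fin 3 → Module.End k (M k) := ![L1, L2, T]

lemma L1_single (s : FreeMonoid (Fin 3)) (b : k) :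
    L1 (k := k) (Finsupp.single s b) = b • nf1 k (FreeMonoid.toList s) := by
  rw [L1, Finsupp.linearCombination_single]

lemma L2_single (s : FreeMonoid (Fin 3)) (b : k) :
    L2 (k := k) (Finsupp.single s b) = Finsupp.single (FreeMonoid.of 1 * s) b := by
  rw [L2, Finsupp.lmapDomain_apply, Finsupp.mapDomain_single]

lemma Lc3_single (s : FreeMonoid (Fin 3)) (b : k) :
    Lc3 (k := k) (Finsupp.single s b) = Finsupp.single (FreeMonoid.of 2 * s) b := by
  rw [Lc3, Finsupp.lmapDomain_apply, Finsupp.mapDomain_single]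

lemma rel (T : M k →ₗ[k] M k) :
    Lgen T 0 * Lgen T 1 = Lgen T 1 * Lgen T 0 + 1 := by
  show L1 * L2 = L2 * L1 + (1 : Module.End k (M k))
  apply Finsupp.lhom_ext
  intro s b
  show L1 (L2 (Finsupp.single s b)) = L2 (L1 (Finsupp.single s b)) + Finsupp.single s b
  rw [L2_single, L1_single, L1_single, map_smul, L2, Finsupp.lmapDomain_apply,
    show FreeMonoid.toList (FreeMonoid.of 1 * s) = 1 :: FreeMonoid.toList s from rfl,
    nf1_cons1, FreeMonoid.ofList_toList, smul_add, Finsupp.smul_single, smul_eq_mul, mul_one]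

def Psi (T : M k →ₗ[k] M k) : FA k →ₐ[k] Module.End k (M k) :=
  MonoidAlgebra.lift k (Module.End k (M k)) (FreeMonoid (Fin 3)) (FreeMonoid.lift (Lgen T))

lemma Psi_X (T : M k →ₗ[k] M k) (i : Fin 3) : Psi T (X i) = Lgen T i := by
  rw [Psi, X, MonoidAlgebra.lift_single, FreeMonoid.lift_eval_of, one_smul]

lemma Psi_delta (T : M k →ₗ[k] M k) : Psi T (X 0 * X 1 - X 1 * X 0 - 1) = 0 := by
  rw [map_sub, map_sub, map_mul, map_mul, map_one, Psi_X, Psi_X, rel T]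
  abel

lemma Psi_vanish (T : M k →ₗ[k] M k) (δ : FA k) (hδ : δ = X 0 * X 1 - X 1 * X 0 - 1)
    (S : Set (FA k)) (hS : S ⊆ {x | ∃ a b : FA k, x = a * X 2 * b ∨ x = a * δ * b})
    (hT : Psi T (X 2) = 0 ∨ S ⊆ {x | ∃ a b : FA k, x = a * δ * b})
    (f : FA k) (hf : f ∈ Submodule.span k S) : Psi T f = 0 := by
  have key : ∀ x ∈ S, Psi T x = 0 := by
    intro x hx
    rcases hT with hT | hT
    · obtain ⟨a, b, (rfl | rfl)⟩ := hS hx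
      · rw [map_mul, map_mul, hT, mul_zero, zero_mul]
      · rw [map_mul, map_mul, hδ, Psi_delta, mul_zero, zero_mul]
    · obtain ⟨a, b, rfl⟩ := hT hx
      rw [map_mul, map_mul, hδ, Psi_delta, mul_zero, zero_mul]
  have : Submodule.span k S ≤ LinearMap.ker (Psi T).toLinearMap := by
    rw [Submodule.span_le]
    intro x hx
    rw [SetLike.mem_coe, LinearMap.mem_ker]
    exact key x hx
  exact this hf

lemma nf1_supp : ∀ (s : List (Fin 3)), ∀ u ∈ (nf1 k s).support,
    u ≤ FreeMonoid.of 0 * FreeMonoid.ofList s := by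
  intro s
  induction s with
  | nil =>
    intro u hu
    have := Finsupp.support_single_subset hu
    simp only [Finset.mem_singleton] at this
    rw [this]
    exact le_of_eq rfl
  | cons a s ih =>
    intro u hu
    by_cases ha : a = (1 : Fin 3)
    · subst ha
      rw [nf1_cons1] at hu
      classical
      rcases Finset.mem_union.mp (Finsupp.support_add hu) with hu | hu
      · obtain ⟨u', hu', rfl⟩ := Finset.mem_image.mp (Finsupp.mapDomain_support hu)
        have h1 : FreeMonoid.of 1 * u' ≤ FreeMonoid.of 1 * (FreeMonoid.of 0 * FreeMonoid.ofList s) :=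
          mono 1 (ih u' hu')
        have h2 : FreeMonoid.of 1 * (FreeMonoid.of 0 * FreeMonoid.ofList s) <
            FreeMonoid.of 0 * FreeMonoid.ofList (1 :: s) := lt_swap s
        exact le_of_lt (lt_of_le_of_lt h1 h2)
      · have := Finsupp.support_single_subset hu
        simp only [Finset.mem_singleton] at this
        rw [this]
        exact le_of_lt (lt_drop s)
    · rw [nf1_cons a ha] at hu
      have := Finsupp.support_single_subset hu
      simp only [Finset.mem_singleton] at this
      rw [this]
      exact le_of_eq rfl

lemma fin3_cases (a : Fin 3) : a = 0 ∨ a = 1 ∨ a = 2 := by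
  fin_cases a
  exacts [Or.inl rfl, Or.inr (Or.inl rfl), Or.inr (Or.inr rfl)]

lemma Lapp_supp (T : M k →ₗ[k] M k)
    (hT : ∀ (m : M k) (t : FreeMonoid (Fin 3)), (∀ u ∈ m.support, u ≤ t) →
      ∀ u ∈ (T m).support, u ≤ FreeMonoid.of 2 * t)
    (a : Fin 3) (m : M k) (t : FreeMonoid (Fin 3)) (hm : ∀ u ∈ m.support, u ≤ t) :
    ∀ u ∈ ((Lgen T a) m).support, u ≤ FreeMonoid.of a * t := by
  intro u hu
  classical
  rcases fin3_cases a with rfl | rfl | rfl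
  · -- L1
    have : u ∈ (m.sum fun s c => c • nf1 k (FreeMonoid.toList s)).support := by
      have : Lgen T 0 m = m.sum fun s c => c • nf1 k (FreeMonoid.toList s) := by
        show L1 m = _
        rw [L1, Finsupp.linearCombination_apply]
      rwa [this] at hu
    obtain ⟨s, hs, hus⟩ := Finset.mem_biUnion.mp (Finsupp.support_sum this)
    have h1 : u ≤ FreeMonoid.of 0 * s := by
      have := Finsupp.support_smul hus
      have h := nf1_supp (FreeMonoid.toList s) u this
      rwa [FreeMonoid.ofList_toList] at h
    exact le_trans h1 (mono 0 (hm s hs))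
  · -- L2
    have : Lgen T 1 m = Finsupp.mapDomain (fun w => FreeMonoid.of 1 * w) m := by
      show L2 m = _
      rw [L2, Finsupp.lmapDomain_apply]
    rw [this] at hu
    obtain ⟨s, hs, rfl⟩ := Finset.mem_image.mp (Finsupp.mapDomain_support hu)
    exact mono 1 (hm s hs)
  · exact hT m t hm u hu

lemma SUPP (T : M k →ₗ[k] M k)
    (hT : ∀ (m : M k) (t : FreeMonoid (Fin 3)), (∀ u ∈ m.support, u ≤ t) →
      ∀ u ∈ (T m).support, u ≤ FreeMonoid.of 2 * t) :
    ∀ (w : List (Fin 3)) (m : M k) (t : FreeMonoid (Fin 3)), (∀ u ∈ m.support, u ≤ t) →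
      ∀ u ∈ ((FreeMonoid.lift (Lgen T)) (FreeMonoid.ofList w) m).support,
        u ≤ FreeMonoid.ofList w * t := by
  intro w
  induction w with
  | nil =>
    intro m t hm u hu
    have h1 : (FreeMonoid.lift (Lgen T)) (FreeMonoid.ofList []) m = m := by
      rw [show FreeMonoid.ofList ([] : List (Fin 3)) = 1 from rfl, map_one]
      rfl
    rw [h1] at hu
    rw [show FreeMonoid.ofList ([] : List (Fin 3)) = 1 from rfl, one_mul]
    exact hm u hu
  | cons a w ih =>
    intro m t hm u hu
    have h1 : FreeMonoid.ofList (a :: w) = FreeMonoid.of a * FreeMonoid.ofList w := rfl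
    rw [h1, map_mul] at hu
    have h2 : (FreeMonoid.lift (Lgen T) (FreeMonoid.of a) * FreeMonoid.lift (Lgen T) (FreeMonoid.ofList w)) m
        = (Lgen T a) ((FreeMonoid.lift (Lgen T) (FreeMonoid.ofList w)) m) := by
      rw [FreeMonoid.lift_eval_of]; rfl
    rw [h2] at hu
    have h3 := Lapp_supp T hT a _ (FreeMonoid.ofList w * t) (ih m t hm) u hu
    rw [h1, mul_assoc]
    exact h3

def R3 : Fin 3 → Fin 3 → Prop := fun a b => ¬(a = 0 ∧ b = 1)

lemma EX (T : M k →ₗ[k] M k) :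
    ∀ (u : List (Fin 3)), List.Chain' R3 u →
    (∀ s : FreeMonoid (Fin 3), (2 : Fin 3) ∈ u →
      T (Finsupp.single s 1) = Finsupp.single (FreeMonoid.of 2 * s) 1) →
    (FreeMonoid.lift (Lgen T)) (FreeMonoid.ofList u) (Finsupp.single 1 1)
      = Finsupp.single (FreeMonoid.ofList u) 1 := by
  intro u
  induction u with
  | nil =>
    intro _ _
    rw [show FreeMonoid.ofList ([] : List (Fin 3)) = 1 from rfl, map_one]
    rfl
  | cons a u ih =>
    intro hch h2
    have hih := ih (hch.tail) (fun s hs => h2 s (List.mem_cons_of_mem a hs))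
    have h1 : FreeMonoid.ofList (a :: u) = FreeMonoid.of a * FreeMonoid.ofList u := rfl
    rw [h1, map_mul]
    have hmul : (FreeMonoid.lift (Lgen T) (FreeMonoid.of a) * FreeMonoid.lift (Lgen T) (FreeMonoid.ofList u)) (Finsupp.single 1 1)
        = (Lgen T a) ((FreeMonoid.lift (Lgen T) (FreeMonoid.ofList u)) (Finsupp.single 1 1)) := by
      rw [FreeMonoid.lift_eval_of]; rfl
    rw [hmul, hih]
    rcases fin3_cases a with rfl | rfl | rfl
    · -- a = 0 : L1
      show L1 (Finsupp.single (FreeMonoid.ofList u) 1) = _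
      rw [L1_single, one_smul, FreeMonoid.toList_ofList]
      cases u with
      | nil => rw [nf1_nil]; rfl
      | cons b u' =>
        have hb : b ≠ 1 := by
          have := (List.isChain_cons_cons.mp hch).1
          intro hb1
          exact this ⟨rfl, hb1⟩
        rw [nf1_cons b hb]
        rfl
    · -- a = 1 : L2
      show L2 (Finsupp.single (FreeMonoid.ofList u) 1) = _
      rw [L2_single]
    · -- a = 2 : T
      show T (Finsupp.single (FreeMonoid.ofList u) 1) = _
      rw [h2 (FreeMonoid.ofList u) List.mem_cons_self]

lemma MASTER (T : M k →ₗ[k] M k)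
    (hT : ∀ (m : M k) (t : FreeMonoid (Fin 3)), (∀ u ∈ m.support, u ≤ t) →
      ∀ u ∈ (T m).support, u ≤ FreeMonoid.of 2 * t)
    (f : FA k) (hker : Psi T f = 0) (u : FreeMonoid (Fin 3)) (hTIP : TIP f = (u : WithBot (FreeMonoid (Fin 3))))
    (hEX : (FreeMonoid.lift (Lgen T)) u (Finsupp.single (1 : FreeMonoid (Fin 3)) 1)
      = Finsupp.single u 1) : False := by
  classical
  have humem : u ∈ f.coeff.support := Finset.mem_of_max hTIP
  have hexp : Psi T f = f.coeff.sum fun w c => c • (FreeMonoid.lift (Lgen T)) w := by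
    rw [Psi, MonoidAlgebra.lift_apply]
  have h0 : (Psi T f) (Finsupp.single (1 : FreeMonoid (Fin 3)) 1) = 0 := by rw [hker]; rfl
  rw [hexp] at h0
  rw [Finsupp.sum] at h0
  have h1 : (∑ w ∈ f.coeff.support, (f.coeff w • (FreeMonoid.lift (Lgen T)) w)) (Finsupp.single (1 : FreeMonoid (Fin 3)) 1)
      = ∑ w ∈ f.coeff.support, f.coeff w • ((FreeMonoid.lift (Lgen T)) w (Finsupp.single (1 : FreeMonoid (Fin 3)) 1)) := by
    rw [LinearMap.coe_sum, Finset.sum_apply]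
    simp [LinearMap.smul_apply]
  rw [h1] at h0
  have h2 := congrArg (fun g : M k => g u) h0
  simp only [Finsupp.coe_finset_sum, Finset.sum_apply, Finsupp.smul_apply, Finsupp.coe_zero,
    Pi.zero_apply, smul_eq_mul] at h2
  have h3 : ∑ w ∈ f.coeff.support, f.coeff w * ((FreeMonoid.lift (Lgen T)) w (Finsupp.single (1 : FreeMonoid (Fin 3)) 1)) u = f.coeff u := by
    rw [Finset.sum_eq_single u]
    · rw [hEX, Finsupp.single_eq_same, mul_one]
    · intro w hw hwu
      have hle : w ≤ u := by
        have := Finset.le_max hw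
        rw [show f.coeff.support.max = TIP f from rfl, hTIP] at this
        exact WithBot.coe_le_coe.mp this
      have hlt : w < u := lt_of_le_of_ne hle hwu
      have hsupp : ∀ v ∈ ((FreeMonoid.lift (Lgen T)) w (Finsupp.single (1 : FreeMonoid (Fin 3)) 1)).support, v ≤ w := by
        intro v hv
        have hm : ∀ x ∈ (Finsupp.single (1 : FreeMonoid (Fin 3)) (1:k)).support, x ≤ (1 : FreeMonoid (Fin 3)) := by
          intro x hx
          have := Finsupp.support_single_subset hx
          simp only [Finset.mem_singleton] at this
          rw [this]
        have := SUPP T hT (FreeMonoid.toList w) _ 1 hm v (by rwa [FreeMonoid.ofList_toList])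
        rwa [FreeMonoid.ofList_toList, mul_one] at this
      have : u ∉ ((FreeMonoid.lift (Lgen T)) w (Finsupp.single (1 : FreeMonoid (Fin 3)) 1)).support := by
        intro hu
        exact absurd (hsupp u hu) (not_le_of_gt hlt)
      rw [Finsupp.notMem_support_iff.mp this, mul_zero]
    · intro h
      exact absurd humem h
  rw [h3] at h2
  exact (Finsupp.mem_support_iff.mp humem) h2

lemma toList_pow (a : Fin 3) (n : ℕ) :
    FreeMonoid.toList (FreeMonoid.of a ^ n) = List.replicate n a := by
  induction n with
  | zero => rfl
  | succ n ih =>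
    rw [pow_succ', List.replicate_succ]
    rw [show FreeMonoid.toList (FreeMonoid.of a * FreeMonoid.of a ^ n)
      = a :: FreeMonoid.toList (FreeMonoid.of a ^ n) from rfl, ih]

lemma word1_list (i j : ℕ) :
    FreeMonoid.toList ((FreeMonoid.of (1 : Fin 3)) ^ i * (FreeMonoid.of 0) ^ j)
      = List.replicate i 1 ++ List.replicate j 0 := by
  rw [FreeMonoid.toList_mul, toList_pow, toList_pow]

lemma chain'_rep (a : Fin 3) (h : R3 a a) (n : ℕ) : List.Chain' R3 (List.replicate n a) := by
  induction n with
  | zero => exact List.isChain_nil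
  | succ n ih =>
    unfold List.Chain'
    rw [List.replicate_succ, List.isChain_cons]
    refine ⟨?_, ih⟩
    intro y hy
    cases n with
    | zero => simp at hy
    | succ m =>
      rw [List.replicate_succ] at hy
      simp only [List.head?_cons, Option.mem_some_iff] at hy
      exact hy ▸ h

lemma chain_word1 (i j : ℕ) : List.Chain' R3 (List.replicate i (1 : Fin 3) ++ List.replicate j 0) := by
  unfold List.Chain'
  rw [List.isChain_append]
  refine ⟨chain'_rep 1 (by simp [R3]) i, chain'_rep 0 (by simp [R3]) j, ?_⟩
  intro x hx y hy
  have hy0 : (0 : Fin 3) = y := by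
    cases j with
    | zero => simp at hy
    | succ m =>
      rw [List.replicate_succ] at hy
      simpa using hy
  subst hy0
  simp [R3]

lemma no2_word1 (i j : ℕ) : (2 : Fin 3) ∉ List.replicate i (1 : Fin 3) ++ List.replicate j 0 := by
  intro h
  rcases List.mem_append.mp h with h | h <;>
    · rw [List.mem_replicate] at h
      exact absurd h.2 (by decide)

lemma notchain : ∀ (l : List (Fin 3)), ¬ List.Chain' R3 l →
    ∃ a b : List (Fin 3), l = a ++ 0 :: 1 :: b := by
  intro l
  induction l with
  | nil => intro h; exact absurd List.isChain_nil h
  | cons x xs ih =>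
    intro h
    unfold List.Chain' at h
    rw [List.isChain_cons] at h
    rcases not_and_or.mp h with h | h
    · push_neg at h
      obtain ⟨y, hy, hxy⟩ := h
      have hxy' : x = 0 ∧ y = 1 := by
        by_contra hc
        exact hxy hc
      obtain ⟨rfl, rfl⟩ := hxy'
      cases xs with
      | nil => simp at hy
      | cons z xs' =>
        simp only [List.head?_cons, Option.mem_some_iff] at hy
        subst hy
        exact ⟨[], xs', rfl⟩
    · obtain ⟨a, b, rfl⟩ := ih h
      exact ⟨x :: a, b, rfl⟩

lemma hT_zero : ∀ (m : M k) (t : FreeMonoid (Fin 3)), (∀ u ∈ m.support, u ≤ t) →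
    ∀ u ∈ ((0 : M k →ₗ[k] M k) m).support, u ≤ FreeMonoid.of 2 * t := by
  intro m t _ u hu
  simp at hu

lemma hT_Lc3 : ∀ (m : M k) (t : FreeMonoid (Fin 3)), (∀ u ∈ m.support, u ≤ t) →
    ∀ u ∈ ((Lc3 : M k →ₗ[k] M k) m).support, u ≤ FreeMonoid.of 2 * t := by
  intro m t hm u hu
  classical
  rw [show (Lc3 : M k →ₗ[k] M k) m = Finsupp.mapDomain (fun w => FreeMonoid.of 2 * w) m from by
    rw [Lc3, Finsupp.lmapDomain_apply]] at hu
  obtain ⟨s, hs, rfl⟩ := Finset.mem_image.mp (Finsupp.mapDomain_support hu)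
  exact mono 2 (hm s hs)

end Stmt9Aux

open Stmt9Aux

/-- In `A = k⟨x₁,x₂,x₃⟩` with `δ = x₁x₂ − x₂x₁ − 1`: for every nonzero
`f` in the two-sided ideal `(x₃, δ)` and all `i, j ≥ 0`, `TIP f ≠ x₂ⁱx₁ʲ` for the degree
order; and if moreover `f` lies in the two-sided ideal `(δ)`, then `TIP f = a·x₁x₂·b`
for some monomials `a`, `b`. -/
theorem stmt9 (k : Type) [Field k]
    (δ : FA k) (hδ : δ = X 0 * X 1 - X 1 * X 0 - 1)
    (I : Submodule k (FA k))
    (hI : I = Submodule.span k {x | ∃ a b : FA k, x = a * X 2 * b ∨ x = a * δ * b})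
    (Iδ : Submodule k (FA k))
    (hIδ : Iδ = Submodule.span k {x | ∃ a b : FA k, x = a * δ * b}) :
    (∀ f ∈ I, f ≠ 0 → ∀ i j : ℕ,
      TIP f ≠ (((FreeMonoid.of (1 : Fin 3)) ^ i * (FreeMonoid.of 0) ^ j :
        FreeMonoid (Fin 3)) : WithBot (FreeMonoid (Fin 3)))) ∧
    (∀ f ∈ Iδ, f ≠ 0 → ∃ a b : FreeMonoid (Fin 3),
      TIP f = ((a * (FreeMonoid.of (0 : Fin 3) * FreeMonoid.of 1) * b :
        FreeMonoid (Fin 3)) : WithBot (FreeMonoid (Fin 3)))) := by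
  subst hδ hI hIδ
  constructor
  · intro f hf hfne i j habs
    have hker : Psi (k := k) 0 f = 0 := by
      refine Psi_vanish 0 _ rfl _ (fun x hx => hx) (Or.inl ?_) f hf
      rw [Psi_X]
      rfl
    refine MASTER (k := k) 0 hT_zero f hker _ habs ?_
    have hw : (FreeMonoid.of (1 : Fin 3)) ^ i * (FreeMonoid.of 0) ^ j
        = FreeMonoid.ofList (List.replicate i 1 ++ List.replicate j 0) := by
      apply FreeMonoid.toList.injective
      rw [FreeMonoid.toList_ofList, word1_list]
    rw [hw]
    exact EX 0 _ (chain_word1 i j) (fun s hs => absurd hs (no2_word1 i j))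
  · intro f hf hfne
    have hker : Psi (k := k) Lc3 f = 0 := by
      refine Psi_vanish Lc3 _ rfl _ (fun x hx => by
          obtain ⟨a, b, rfl⟩ := hx
          exact ⟨a, b, Or.inr rfl⟩)
        (Or.inr (fun x hx => hx)) f hf
    have hsne : f.coeff.support.Nonempty := Finsupp.support_nonempty_iff.mpr (mt MonoidAlgebra.coeff_eq_zero.mp hfne)
    obtain ⟨w0, hw0⟩ := hsne
    obtain ⟨u, hu'⟩ := Finset.max_of_mem hw0
    have hu : TIP f = (u : WithBot (FreeMonoid (Fin 3))) := hu'
    by_contra hcon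
    push_neg at hcon
    have hch : List.Chain' R3 (FreeMonoid.toList u) := by
      by_contra hnc
      obtain ⟨a, b, hab⟩ := notchain _ hnc
      refine hcon (FreeMonoid.ofList a) (FreeMonoid.ofList b) ?_
      rw [hu]
      congr 1
      apply FreeMonoid.toList.injective
      rw [hab]
      simp [FreeMonoid.toList_mul, FreeMonoid.toList_ofList]
    refine MASTER (k := k) Lc3 hT_Lc3 f hker u hu ?_
    have hw : u = FreeMonoid.ofList (FreeMonoid.toList u) := (FreeMonoid.ofList_toList u).symm
    rw [hw]
    exact EX Lc3 _ hch (fun s _ => Lc3_single s 1)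
end
end

section
/- In the free algebra k⟨x₁, x₂, x₃⟩ with δ = x₁x₂ − x₂x₁ − 1: for any i, j ≥ 0, the left ideals A·(x₁x₂·x₂ⁱx₁ʲ) and A·(x₃·x₂ⁱx₁ʲ) intersect trivially, and consequently for all nonzero f₁, f₂ ∈ A, TIP(f₂·δ·x₂ⁱx₁ʲ) = TIP(f₂·x₁x₂·x₂ⁱx₁ʲ) ≠ TIP(f₁·x₃·x₂ⁱx₁ʲ), where TIP is the leading monomial for the degree order. -/
noncomputable section

namespace Stmt16Aux

open FreeMonoid

instance : DecidableEq (FreeMonoid (Fin 3)) := inferInstanceAs (DecidableEq (List (Fin 3)))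

/-- Count of the generator `n` in a word. -/
def cnt (n : Fin 3) (w : FreeMonoid (Fin 3)) : ℕ := (FreeMonoid.toList w).count n

lemma dlist_eq (w : FreeMonoid (Fin 3)) : dlist w = [cnt 2 w, cnt 1 w, cnt 0 w] := by
  simp [dlist, cnt, List.ofFn_succ]

lemma cnt_mul (n : Fin 3) (a b : FreeMonoid (Fin 3)) :
    cnt n (a * b) = cnt n a + cnt n b := by
  simp [cnt, FreeMonoid.toList_mul, List.count_append]

lemma cnt_of (n a : Fin 3) : cnt n (of a) = if a = n then 1 else 0 := by
  simp [cnt, FreeMonoid.toList_of, List.count_singleton']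

lemma lex3 {a b c a' b' c' : ℕ} :
    ([a, b, c] : List ℕ) < [a', b', c'] ↔
      a < a' ∨ a = a' ∧ (b < b' ∨ b = b' ∧ c < c') := by
  constructor
  · intro h
    cases h with
    | rel h => exact Or.inl h
    | cons h =>
      cases h with
      | rel h => exact Or.inr ⟨rfl, Or.inl h⟩
      | cons h =>
        cases h with
        | rel h => exact Or.inr ⟨rfl, Or.inr ⟨rfl, h⟩⟩
        | cons h => cases h
  · rintro (h | ⟨rfl, h | ⟨rfl, h⟩⟩)
    · exact List.Lex.rel h
    · exact List.Lex.cons (List.Lex.rel h)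
    · exact List.Lex.cons (List.Lex.cons (List.Lex.rel h))

lemma lt_iff' (x y : FreeMonoid (Fin 3)) :
    x < y ↔ dlist x < dlist y ∨ dlist x = dlist y ∧
      (toList x).reverse < (toList y).reverse :=
  Prod.Lex.lt_iff

lemma lex_append {α} {r : α → α → Prop} (p : List α) {l₁ l₂ : List α}
    (h : List.Lex r l₁ l₂) : List.Lex r (p ++ l₁) (p ++ l₂) := by
  induction p with
  | nil => exact h
  | cons x xs ih => exact List.Lex.cons ih

lemma mul_lt_right {a b : FreeMonoid (Fin 3)} (h : a < b) (w : FreeMonoid (Fin 3)) :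
    a * w < b * w := by
  rw [lt_iff'] at h ⊢
  rcases h with h | ⟨he, hr⟩
  · left
    rw [dlist_eq, dlist_eq, lex3] at h ⊢
    simp only [cnt_mul]
    omega
  · have he' : cnt 2 a = cnt 2 b ∧ cnt 1 a = cnt 1 b ∧ cnt 0 a = cnt 0 b := by
      rw [dlist_eq, dlist_eq] at he; simpa using he
    right
    refine ⟨?_, ?_⟩
    · rw [dlist_eq, dlist_eq]
      simp only [cnt_mul, he'.1, he'.2.1, he'.2.2]
    · have := lex_append ((toList w).reverse) (l₁ := (toList a).reverse)
        (l₂ := (toList b).reverse) hr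
      simpa [FreeMonoid.toList_mul, List.reverse_append] using this

lemma mul_le_right {a b : FreeMonoid (Fin 3)} (h : a ≤ b) (w : FreeMonoid (Fin 3)) :
    a * w ≤ b * w := by
  rcases h.lt_or_eq with h | rfl
  · exact (mul_lt_right h w).le
  · exact le_rfl

lemma cnt_le {u m : FreeMonoid (Fin 3)} (h : u ≤ m) :
    cnt 2 u < cnt 2 m ∨ cnt 2 u = cnt 2 m ∧
      (cnt 1 u < cnt 1 m ∨ cnt 1 u = cnt 1 m ∧ cnt 0 u ≤ cnt 0 m) := by
  rcases h.lt_or_eq with h | rfl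
  · rw [lt_iff'] at h
    rcases h with h | ⟨he, _⟩
    · rw [dlist_eq, dlist_eq, lex3] at h
      omega
    · have he' : cnt 2 u = cnt 2 m ∧ cnt 1 u = cnt 1 m ∧ cnt 0 u = cnt 0 m := by
        rw [dlist_eq, dlist_eq] at he; simpa using he
      omega
  · omega

lemma key1 {u m : FreeMonoid (Fin 3)} (h : u ≤ m) :
    u * (of 1 * of 0) < m * (of 0 * of 1) := by
  have harr := cnt_le h
  rw [lt_iff']
  have hd : dlist (u * (of 1 * of 0)) < dlist (m * (of 0 * of 1)) ∨
      dlist (u * (of 1 * of 0)) = dlist (m * (of 0 * of 1)) := by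
    simp only [dlist_eq, lex3, cnt_mul, cnt_of, List.cons.injEq, and_true]
    simp only [show ((1:Fin 3) = 2) = False by simp, show ((0:Fin 3) = 2) = False by simp,
      show ((1:Fin 3) = 1) = True by simp, show ((0:Fin 3) = 1) = False by simp,
      show ((1:Fin 3) = 0) = False by simp, show ((0:Fin 3) = 0) = True by simp,
      if_true, if_false]
    omega
  have hrev : (toList (u * (of 1 * of 0))).reverse <
      (toList (m * (of 0 * of 1))).reverse := by
    simp only [FreeMonoid.toList_mul, FreeMonoid.toList_of, List.reverse_append,
      List.reverse_cons, List.reverse_nil, List.nil_append, List.cons_append,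
      List.append_assoc]
    exact List.Lex.rel (by decide)
  rcases hd with hd | hd
  · exact Or.inl hd
  · exact Or.inr ⟨hd, hrev⟩

lemma key2 {u m : FreeMonoid (Fin 3)} (h : u ≤ m) :
    u < m * (of 0 * of 1) := by
  have harr := cnt_le h
  rw [lt_iff']
  left
  simp only [dlist_eq, lex3, cnt_mul, cnt_of]
  simp only [show ((1:Fin 3) = 2) = False by simp, show ((0:Fin 3) = 2) = False by simp,
    show ((1:Fin 3) = 1) = True by simp, show ((0:Fin 3) = 1) = False by simp,
    show ((1:Fin 3) = 0) = False by simp, show ((0:Fin 3) = 0) = True by simp,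
    if_true, if_false]
  omega

variable {k : Type} [Field k]

lemma supp_mul_S (f : FA k) (u : FreeMonoid (Fin 3)) :
    (f * MonoidAlgebra.single u (1:k)).coeff.support = f.coeff.support.image (· * u) :=
  MonoidAlgebra.support_coeff_mul_single_eq_image f (by simp) (IsRightRegular.all u)

lemma coeff_mul_S (f : FA k) (u y : FreeMonoid (Fin 3)) :
    (f * MonoidAlgebra.single u (1:k)).coeff (y * u) = f.coeff y := by
  rw [MonoidAlgebra.coeff_mul_single_eq_coeff_mul (x := f) y
    (fun a _ => ⟨fun h => mul_right_cancel h, fun h => by rw [h]⟩), mul_one]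

lemma TIP_mul (f : FA k) (hf : f ≠ 0) (u : FreeMonoid (Fin 3)) :
    TIP (f * MonoidAlgebra.single u (1:k)) =
      ((f.coeff.support.max' (Finsupp.support_nonempty_iff.2 (by simpa using hf))) * u :
        FreeMonoid (Fin 3)) := by
  apply le_antisymm
  · apply Finset.max_le
    intro z hz
    rw [supp_mul_S] at hz
    rcases Finset.mem_image.1 hz with ⟨y, hy, rfl⟩
    exact WithBot.coe_le_coe.2 (mul_le_right (Finset.le_max' _ _ hy) u)
  · apply Finset.le_max
    rw [supp_mul_S]
    exact Finset.mem_image_of_mem _ (Finset.max'_mem _ _)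

lemma words_ne (a b w : FreeMonoid (Fin 3)) :
    a * ((of 0 * of 1) * w) ≠ b * (of 2 * w) := by
  intro h
  have h' := congrArg (fun t : FreeMonoid (Fin 3) => (FreeMonoid.toList t).reverse) h
  simp only [FreeMonoid.toList_mul, FreeMonoid.toList_of, List.reverse_append,
    List.reverse_cons, List.reverse_nil, List.nil_append, List.cons_append,
    List.append_assoc] at h'
  have h'' := List.append_cancel_left h'
  simp at h''

lemma finset_max_eq {s : Finset (FreeMonoid (Fin 3))} {M : FreeMonoid (Fin 3)}
    (hM : M ∈ s) (hb : ∀ z ∈ s, z ≤ M) : s.max = ↑M :=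
  le_antisymm (Finset.max_le fun a ha => WithBot.coe_le_coe.2 (hb a ha)) (Finset.le_max hM)

end Stmt16Aux

open Stmt16Aux FreeMonoid in
/-- In `k⟨x₁, x₂, x₃⟩` with `δ = x₁x₂ − x₂x₁ − 1`: for any `i, j ≥ 0` and
`v = x₂ⁱx₁ʲ`, the left ideals `A·(x₁x₂·v)` and `A·(x₃·v)` intersect trivially, and
consequently for all nonzero `f₁, f₂ ∈ A`,
`TIP (f₂·δ·v) = TIP (f₂·x₁x₂·v) ≠ TIP (f₁·x₃·v)` for the degree order. -/
theorem stmt16 (k : Type) [Field k]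
    (δ : FA k) (hδ : δ = X 0 * X 1 - X 1 * X 0 - 1)
    (i j : ℕ) (v : FA k) (hv : v = (X 1) ^ i * (X 0) ^ j) :
    (Submodule.span (FA k) {X 0 * X 1 * v} ⊓ Submodule.span (FA k) {X 2 * v}
      = (⊥ : Submodule (FA k) (FA k))) ∧
    (∀ f₁ f₂ : FA k, f₁ ≠ 0 → f₂ ≠ 0 →
      TIP (f₂ * δ * v) = TIP (f₂ * (X 0 * X 1) * v) ∧
      TIP (f₂ * δ * v) ≠ TIP (f₁ * X 2 * v)) := by
  have hv' : v = MonoidAlgebra.single ((of 1 : FreeMonoid (Fin 3))^i * (of 0)^j) (1:k) := by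
    rw [hv]
    simp [X, MonoidAlgebra.single_pow, MonoidAlgebra.single_mul_single]
  set wv : FreeMonoid (Fin 3) := (of 1)^i * (of 0)^j with hwv
  have h01 : X 0 * X 1 * v = MonoidAlgebra.single ((of 0 * of 1 : FreeMonoid (Fin 3)) * wv) (1:k) := by
    rw [hv']
    simp [X, MonoidAlgebra.single_mul_single, mul_assoc]
  have h10 : X 1 * X 0 * v = MonoidAlgebra.single ((of 1 * of 0 : FreeMonoid (Fin 3)) * wv) (1:k) := by
    rw [hv']
    simp [X, MonoidAlgebra.single_mul_single, mul_assoc]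
  have h2v : X 2 * v = MonoidAlgebra.single ((of 2 : FreeMonoid (Fin 3)) * wv) (1:k) := by
    rw [hv']
    simp [X, MonoidAlgebra.single_mul_single]
  constructor
  · rw [Submodule.eq_bot_iff]
    intro x hx
    rw [Submodule.mem_inf] at hx
    obtain ⟨hx1, hx2⟩ := hx
    rcases Submodule.mem_span_singleton.1 hx1 with ⟨r₁, e₁⟩
    rcases Submodule.mem_span_singleton.1 hx2 with ⟨r₂, e₂⟩
    by_contra hx0
    have hr₁ : r₁ ≠ 0 := by rintro rfl; rw [zero_smul] at e₁; exact hx0 e₁.symm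
    have hr₂ : r₂ ≠ 0 := by rintro rfl; rw [zero_smul] at e₂; exact hx0 e₂.symm
    have t₁ : TIP x = ↑(r₁.coeff.support.max' (Finsupp.support_nonempty_iff.2 (by simpa using hr₁)) *
        ((of 0 * of 1 : FreeMonoid (Fin 3)) * wv)) := by
      rw [← e₁, smul_eq_mul, h01]
      exact TIP_mul r₁ hr₁ _
    have t₂ : TIP x = ↑(r₂.coeff.support.max' (Finsupp.support_nonempty_iff.2 (by simpa using hr₂)) *
        ((of 2 : FreeMonoid (Fin 3)) * wv)) := by
      rw [← e₂, smul_eq_mul, h2v]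
      exact TIP_mul r₂ hr₂ _
    exact words_ne _ _ _ (WithBot.coe_inj.1 (t₁.symm.trans t₂))
  · intro f₁ f₂ hf₁ hf₂
    set m := f₂.coeff.support.max' (Finsupp.support_nonempty_iff.2 (by simpa using hf₂)) with hm
    have hmem : m ∈ f₂.coeff.support := Finset.max'_mem _ _
    set M : FreeMonoid (Fin 3) := m * ((of 0 * of 1) * wv) with hM
    have hsplit : f₂ * δ * v =
        f₂ * MonoidAlgebra.single ((of 0 * of 1 : FreeMonoid (Fin 3)) * wv) (1:k)
        - f₂ * MonoidAlgebra.single ((of 1 * of 0 : FreeMonoid (Fin 3)) * wv) (1:k)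
        - f₂ * MonoidAlgebra.single wv (1:k) := by
      rw [hδ, mul_sub, mul_sub, mul_one, sub_mul, sub_mul, mul_assoc f₂ (X 0 * X 1) v,
        mul_assoc f₂ (X 1 * X 0) v, h01, h10, hv']
    have hlt10 : ∀ y ∈ f₂.coeff.support, y * ((of 1 * of 0) * wv) < M := by
      intro y hy
      rw [hM, ← mul_assoc y (of 1 * of 0) wv, ← mul_assoc m (of 0 * of 1) wv]
      exact mul_lt_right (key1 (Finset.le_max' _ _ hy)) wv
    have hltv : ∀ y ∈ f₂.coeff.support, y * wv < M := by
      intro y hy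
      rw [hM, ← mul_assoc m (of 0 * of 1) wv]
      exact mul_lt_right (key2 (Finset.le_max' _ _ hy)) wv
    have hle01 : ∀ y ∈ f₂.coeff.support, y * ((of 0 * of 1) * wv) ≤ M := by
      intro y hy
      rw [hM]
      exact mul_le_right (Finset.le_max' _ _ hy) _
    have hMB : (f₂ * MonoidAlgebra.single ((of 1 * of 0 : FreeMonoid (Fin 3)) * wv) (1:k)).coeff M = 0 := by
      rw [← Finsupp.notMem_support_iff, supp_mul_S]
      intro hc
      rcases Finset.mem_image.1 hc with ⟨y, hy, hEq⟩
      exact (hlt10 y hy).ne hEq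
    have hMC : (f₂ * MonoidAlgebra.single wv (1:k)).coeff M = 0 := by
      rw [← Finsupp.notMem_support_iff, supp_mul_S]
      intro hc
      rcases Finset.mem_image.1 hc with ⟨y, hy, hEq⟩
      exact (hltv y hy).ne hEq
    have hMA : (f₂ * MonoidAlgebra.single ((of 0 * of 1 : FreeMonoid (Fin 3)) * wv) (1:k)).coeff M = f₂.coeff m := by
      rw [hM]
      exact coeff_mul_S f₂ _ m
    have hTIP : TIP (f₂ * δ * v) = ↑M := by
      rw [hsplit]
      apply finset_max_eq
      · rw [Finsupp.mem_support_iff, MonoidAlgebra.coeff_sub, MonoidAlgebra.coeff_sub, Finsupp.sub_apply, Finsupp.sub_apply, hMA, hMB, hMC,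
          sub_zero, sub_zero]
        exact Finsupp.mem_support_iff.1 hmem
      · intro z hz
        rw [MonoidAlgebra.coeff_sub, MonoidAlgebra.coeff_sub] at hz
        have hz1 := Finsupp.support_sub hz
        rcases Finset.mem_union.1 hz1 with hz2 | hz2
        · have hz3 := Finsupp.support_sub hz2
          rcases Finset.mem_union.1 hz3 with hz4 | hz4
          · rw [supp_mul_S] at hz4
            rcases Finset.mem_image.1 hz4 with ⟨y, hy, rfl⟩
            exact hle01 y hy
          · rw [supp_mul_S] at hz4
            rcases Finset.mem_image.1 hz4 with ⟨y, hy, rfl⟩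
            exact (hlt10 y hy).le
        · rw [supp_mul_S] at hz2
          rcases Finset.mem_image.1 hz2 with ⟨y, hy, rfl⟩
          exact (hltv y hy).le
    constructor
    · rw [hTIP, mul_assoc, h01, TIP_mul f₂ hf₂, hM, hm]
    · rw [hTIP, mul_assoc, h2v, TIP_mul f₁ hf₁]
      intro hc
      refine words_ne m (f₁.coeff.support.max' (Finsupp.support_nonempty_iff.2 (by simpa using hf₁))) wv ?_
      rw [← hM]
      exact WithBot.coe_inj.1 hc
end
end
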